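/- arXiv:1905.01728 — 2 statements merged into one kernel-verified Lean document; each statement's English description precedes it below -/
import Mathlib

section
/- Let a ≥ b ≥ c > 0 and define G(a,b,c) = E[a²X²/√(a²X² + b²Y² + c²Z²)] where X, Y, Z are independent standard Gaussian random variables. Then G(a,b,c) ≥ G(b,a,c) ≥ G(c,a,b), with equality in the first inequality iff a = b and in the second iff b = c. -/
open MeasureTheory ProbabilityTheory

/-- The product of three standard Gaussian measures on `ℝ × ℝ × ℝ`,
modelling i.i.d. standard normals `X, Y, Z`. -/
noncomputable def gauss3 : Measure (ℝ × ℝ × ℝ) :=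
  (gaussianReal 0 1).prod ((gaussianReal 0 1).prod (gaussianReal 0 1))

/-- `G(a,b,c) = E[a²X²/√(a²X² + b²Y² + c²Z²)]`. -/
noncomputable def Gfun (a b c : ℝ) : ℝ :=
  ∫ p : ℝ × ℝ × ℝ,
    a ^ 2 * p.1 ^ 2 / Real.sqrt (a ^ 2 * p.1 ^ 2 + b ^ 2 * p.2.1 ^ 2 + c ^ 2 * p.2.2 ^ 2)
    ∂gauss3

/-! ### Auxiliary pointwise lemmas -/

section Pointwise
open Real

lemma keyAux (A B u v s : ℝ) (hB : 0 < B) (hAB : B ≤ A) (hu : 0 ≤ u) (hv : 0 ≤ v)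
    (hs : 0 ≤ s) (huv : v ≤ u) :
    0 ≤ (A*u - B*v)/Real.sqrt (A*u+B*v+s) + (A*v - B*u)/Real.sqrt (A*v+B*u+s) := by
  have hA : 0 < A := lt_of_lt_of_le hB hAB
  rcases eq_or_lt_of_le (by positivity : (0:ℝ) ≤ A*v+B*u+s) with h0 | hq
  · have hs0 : s = 0 := by nlinarith [mul_nonneg hA.le hv, mul_nonneg hB.le hu]
    have hv0 : v = 0 := by nlinarith [mul_nonneg hB.le hu]
    have hu0 : u = 0 := le_antisymm (by nlinarith [mul_nonneg hA.le hv]) hu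
    simp [hs0, hv0, hu0]
  · have hp : 0 < A*u+B*v+s := by nlinarith
    set P := Real.sqrt (A*u+B*v+s) with hP
    set Q := Real.sqrt (A*v+B*u+s) with hQ
    have hQ0 : 0 < Q := Real.sqrt_pos.2 hq
    have hP0 : 0 < P := Real.sqrt_pos.2 hp
    have hP2 : P^2 = A*u+B*v+s := Real.sq_sqrt hp.le
    have hQ2 : Q^2 = A*v+B*u+s := Real.sq_sqrt hq.le
    have hN1 : 0 ≤ A*u - B*v := by nlinarith
    rcases le_or_gt 0 (A*v - B*u) with hN2 | hN2
    · positivity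
    · rw [div_add_div _ _ hP0.ne' hQ0.ne']
      apply div_nonneg _ (by positivity)
      have key : ((-(A*v - B*u)) * P)^2 ≤ ((A*u - B*v) * Q)^2 := by
        have factored : ((A*u - B*v)*Q)^2 - ((-(A*v - B*u)) * P)^2 =
            s*((A+B)*(A-B)*(u+v)*(u-v)) +
            (u-v)*(A-B)*(u*v*(A^2+3*A*B+B^2) + A*B*(u^2+u*v+v^2)) := by
          rw [mul_pow, mul_pow, hP2, hQ2]; ring
        nlinarith [mul_nonneg (mul_nonneg (mul_nonneg (by positivity : (0:ℝ) ≤ (A+B)) (sub_nonneg.2 hAB)) (by positivity : (0:ℝ) ≤ u+v)) (sub_nonneg.2 huv),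
          mul_nonneg (mul_nonneg (sub_nonneg.2 huv) (sub_nonneg.2 hAB))
            (by positivity : (0:ℝ) ≤ u*v*(A^2+3*A*B+B^2) + A*B*(u^2+u*v+v^2))]
      have hle := le_of_pow_le_pow_left₀ (by norm_num) (by positivity) key
      nlinarith

lemma keyLem (A B u v s : ℝ) (hB : 0 < B) (hAB : B ≤ A) (hu : 0 ≤ u) (hv : 0 ≤ v) (hs : 0 ≤ s) :
    0 ≤ (A*u - B*v)/Real.sqrt (A*u+B*v+s) + (A*v - B*u)/Real.sqrt (A*v+B*u+s) := by
  rcases le_total v u with h | h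
  · exact keyAux A B u v s hB hAB hu hv hs h
  · rw [add_comm]; exact keyAux A B v u s hB hAB hv hu hs h

lemma keyStrictAux (A B u v s : ℝ) (hB : 0 < B) (hAB : B < A) (hu : 0 < u) (hv : 0 < v)
    (hs : 0 ≤ s) (huv : v ≤ u) :
    0 < (A*u - B*v)/Real.sqrt (A*u+B*v+s) + (A*v - B*u)/Real.sqrt (A*v+B*u+s) := by
  have hA : 0 < A := lt_trans hB hAB
  have hq : 0 < A*v+B*u+s := by nlinarith
  have hp : 0 < A*u+B*v+s := by nlinarith
  set P := Real.sqrt (A*u+B*v+s) with hP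
  set Q := Real.sqrt (A*v+B*u+s) with hQ
  have hQ0 : 0 < Q := Real.sqrt_pos.2 hq
  have hP0 : 0 < P := Real.sqrt_pos.2 hp
  have hP2 : P^2 = A*u+B*v+s := Real.sq_sqrt hp.le
  have hQ2 : Q^2 = A*v+B*u+s := Real.sq_sqrt hq.le
  have hN1 : 0 < A*u - B*v := by nlinarith
  rcases le_or_gt 0 (A*v - B*u) with hN2 | hN2
  · have h1 : 0 < (A*u - B*v)/P := by positivity
    have h2 : 0 ≤ (A*v - B*u)/Q := by positivity
    linarith
  · have huv' : v < u := by
      rcases eq_or_lt_of_le huv with h | h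
      · exfalso; nlinarith
      · exact h
    rw [div_add_div _ _ hP0.ne' hQ0.ne']
    apply div_pos _ (by positivity)
    have key : ((-(A*v - B*u)) * P)^2 < ((A*u - B*v) * Q)^2 := by
      have factored : ((A*u - B*v)*Q)^2 - ((-(A*v - B*u)) * P)^2 =
          s*((A+B)*(A-B)*(u+v)*(u-v)) +
          (u-v)*(A-B)*(u*v*(A^2+3*A*B+B^2) + A*B*(u^2+u*v+v^2)) := by
        rw [mul_pow, mul_pow, hP2, hQ2]; ring
      nlinarith [mul_nonneg (mul_nonneg (mul_nonneg (by positivity : (0:ℝ) ≤ (A+B)) (sub_nonneg.2 hAB.le)) (by positivity : (0:ℝ) ≤ u+v)) (sub_nonneg.2 huv),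
        mul_pos (mul_pos (sub_pos.2 huv') (sub_pos.2 hAB))
          (by positivity : (0:ℝ) < u*v*(A^2+3*A*B+B^2) + A*B*(u^2+u*v+v^2))]
    have hle := lt_of_pow_lt_pow_left₀ 2 (by positivity) key
    nlinarith

lemma keyStrict (A B u v s : ℝ) (hB : 0 < B) (hAB : B < A) (hu : 0 < u) (hv : 0 < v) (hs : 0 ≤ s) :
    0 < (A*u - B*v)/Real.sqrt (A*u+B*v+s) + (A*v - B*u)/Real.sqrt (A*v+B*u+s) := by
  rcases le_total v u with h | h
  · exact keyStrictAux A B u v s hB hAB hu hv hs h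
  · rw [add_comm]; exact keyStrictAux A B v u s hB hAB hv hu hs h

end Pointwise

/-! ### Measure-theoretic infrastructure -/

instance : IsProbabilityMeasure gauss3 := by unfold gauss3; infer_instance

/-- swap first two coordinates -/
def e12 : (ℝ × ℝ × ℝ) ≃ᵐ (ℝ × ℝ × ℝ) :=
  (MeasurableEquiv.prodAssoc.symm.trans
    ((MeasurableEquiv.prodComm (α := ℝ) (β := ℝ)).prodCongr (MeasurableEquiv.refl ℝ))).trans
    MeasurableEquiv.prodAssoc

/-- swap last two coordinates -/
def e23 : (ℝ × ℝ × ℝ) ≃ᵐ (ℝ × ℝ × ℝ) :=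
  (MeasurableEquiv.refl ℝ).prodCongr (MeasurableEquiv.prodComm (α := ℝ) (β := ℝ))

/-- the cycle (x,y,z) ↦ (z,x,y) -/
def e132 : (ℝ × ℝ × ℝ) ≃ᵐ (ℝ × ℝ × ℝ) := e23.trans e12

lemma e12_apply (p : ℝ × ℝ × ℝ) : e12 p = (p.2.1, p.1, p.2.2) := rfl
lemma e23_apply (p : ℝ × ℝ × ℝ) : e23 p = (p.1, p.2.2, p.2.1) := rfl
lemma e132_apply (p : ℝ × ℝ × ℝ) : e132 p = (p.2.2, p.1, p.2.1) := rfl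

lemma mp_e12 : MeasurePreserving e12 gauss3 gauss3 := by
  have h1 : MeasurePreserving (MeasurableEquiv.prodAssoc.symm :
      (ℝ × ℝ × ℝ) ≃ᵐ (ℝ × ℝ) × ℝ) gauss3
      (((gaussianReal 0 1).prod (gaussianReal 0 1)).prod (gaussianReal 0 1)) :=
    (measurePreserving_prodAssoc _ _ _).symm _
  have h2 : MeasurePreserving (Prod.map (Prod.swap : ℝ × ℝ → ℝ × ℝ) (id : ℝ → ℝ))
      (((gaussianReal 0 1).prod (gaussianReal 0 1)).prod (gaussianReal 0 1))
      (((gaussianReal 0 1).prod (gaussianReal 0 1)).prod (gaussianReal 0 1)) :=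
    Measure.measurePreserving_swap.prod (MeasurePreserving.id _)
  have h3 : MeasurePreserving (MeasurableEquiv.prodAssoc :
      ((ℝ × ℝ) × ℝ) ≃ᵐ ℝ × ℝ × ℝ)
      (((gaussianReal 0 1).prod (gaussianReal 0 1)).prod (gaussianReal 0 1)) gauss3 :=
    measurePreserving_prodAssoc _ _ _
  have hfun : ⇑e12 = (⇑(MeasurableEquiv.prodAssoc (α := ℝ) (β := ℝ) (γ := ℝ)) ∘
      Prod.map Prod.swap id) ∘ ⇑(MeasurableEquiv.prodAssoc.symm) := by
    funext p; rfl
  rw [show (⇑e12 : ℝ × ℝ × ℝ → ℝ × ℝ × ℝ) = _ from hfun]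
  exact (h3.comp h2).comp h1

lemma mp_e23 : MeasurePreserving e23 gauss3 gauss3 := by
  have h : MeasurePreserving (Prod.map (id : ℝ → ℝ) (Prod.swap : ℝ × ℝ → ℝ × ℝ))
      gauss3 gauss3 := (MeasurePreserving.id _).prod Measure.measurePreserving_swap
  have hfun : ⇑e23 = Prod.map (id : ℝ → ℝ) (Prod.swap : ℝ × ℝ → ℝ × ℝ) := by funext p; rfl
  rw [hfun]; exact h

lemma mp_e132 : MeasurePreserving e132 gauss3 gauss3 := by
  have h := mp_e12.comp mp_e23
  have hfun : ⇑e132 = ⇑e12 ∘ ⇑e23 := by funext p; rfl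
  rw [hfun]; exact h

lemma gaussianReal_singleton (x : ℝ) : gaussianReal 0 1 {x} = 0 :=
  gaussianReal_absolutelyContinuous 0 one_ne_zero (measure_singleton x)

lemma map_fst_gauss3 : Measure.map Prod.fst gauss3 = gaussianReal 0 1 := by
  rw [gauss3, Measure.map_fst_prod]; simp

lemma map_snd_gauss3 : Measure.map Prod.snd gauss3 =
    (gaussianReal 0 1).prod (gaussianReal 0 1) := by
  rw [gauss3, Measure.map_snd_prod]; simp

lemma gauss3_fst_zero : gauss3 {p : ℝ × ℝ × ℝ | p.1 = 0} = 0 := by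
  have h : {p : ℝ × ℝ × ℝ | p.1 = 0} = Prod.fst ⁻¹' {0} := rfl
  rw [h, ← Measure.map_apply measurable_fst (measurableSet_singleton 0),
    map_fst_gauss3]
  exact gaussianReal_singleton 0

lemma gauss3_snd_fst_zero : gauss3 {p : ℝ × ℝ × ℝ | p.2.1 = 0} = 0 := by
  have h : (fun p : ℝ × ℝ × ℝ => p.2.1) = Prod.fst ∘ Prod.snd := rfl
  have hmap : Measure.map (fun p : ℝ × ℝ × ℝ => p.2.1) gauss3 = gaussianReal 0 1 := by
    rw [h, ← Measure.map_map measurable_fst measurable_snd, map_snd_gauss3,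
      Measure.map_fst_prod]; simp
  have h2 : {p : ℝ × ℝ × ℝ | p.2.1 = 0} = (fun p : ℝ × ℝ × ℝ => p.2.1) ⁻¹' {0} := rfl
  rw [h] at hmap
  rw [h2, h, ← Measure.map_apply (measurable_fst.comp measurable_snd)
    (measurableSet_singleton 0), hmap]
  exact gaussianReal_singleton 0

lemma gauss3_snd_snd_zero : gauss3 {p : ℝ × ℝ × ℝ | p.2.2 = 0} = 0 := by
  have h : (fun p : ℝ × ℝ × ℝ => p.2.2) = Prod.snd ∘ Prod.snd := rfl
  have hmap : Measure.map (fun p : ℝ × ℝ × ℝ => p.2.2) gauss3 = gaussianReal 0 1 := by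
    rw [h, ← Measure.map_map measurable_snd measurable_snd, map_snd_gauss3,
      Measure.map_snd_prod]; simp
  have h2 : {p : ℝ × ℝ × ℝ | p.2.2 = 0} = (fun p : ℝ × ℝ × ℝ => p.2.2) ⁻¹' {0} := rfl
  rw [h] at hmap
  rw [h2, h, ← Measure.map_apply (measurable_snd.comp measurable_snd)
    (measurableSet_singleton 0), hmap]
  exact gaussianReal_singleton 0

/-! ### Integrability -/

lemma integrable_abs_gauss : Integrable (fun x : ℝ => |x|) (gaussianReal 0 1) := by
  rw [gaussianReal, if_neg one_ne_zero]
  rw [integrable_withDensity_iff (measurable_gaussianPDF 0 1)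
    (ae_of_all _ fun x => ENNReal.ofReal_lt_top)]
  have h : Integrable (fun x : ℝ => x ^ (1:ℝ) * Real.exp (-(1/2) * x ^ 2)) volume :=
    integrable_rpow_mul_exp_neg_mul_sq (by norm_num) (by norm_num)
  have h2 : Integrable (fun x : ℝ => |x * Real.exp (-(1/2) * x ^ 2)|) volume := by
    simpa [Real.rpow_one] using h.abs
  apply Integrable.mono h2
  · exact (measurable_abs.mul
      (measurable_gaussianPDF 0 1).ennreal_toReal).aestronglyMeasurable
  · filter_upwards with x
    have hpdf : (gaussianPDF 0 1 x).toReal ≤ Real.exp (-(1/2) * x^2) := by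
      rw [ProbabilityTheory.gaussianPDF_def,
        ENNReal.toReal_ofReal (gaussianPDFReal_nonneg 0 1 x),
        ProbabilityTheory.gaussianPDFReal_def]
      have hexp : -(x - 0)^2 / (2 * ((1:NNReal):ℝ)) = -(1/2) * x^2 := by
        norm_num; ring
      have h1 : ((Real.sqrt (2 * Real.pi * ((1:NNReal):ℝ)))⁻¹ : ℝ) ≤ 1 := by
        rw [inv_le_one_iff₀]; right
        rw [show ((1:NNReal):ℝ) = 1 by simp, mul_one]
        have h2pi : (1:ℝ) ≤ 2 * Real.pi := by nlinarith [Real.pi_gt_three]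
        calc (1:ℝ) = Real.sqrt 1 := Real.sqrt_one.symm
          _ ≤ Real.sqrt (2 * Real.pi) := Real.sqrt_le_sqrt h2pi
      calc (Real.sqrt (2 * Real.pi * ((1:NNReal):ℝ)))⁻¹ * Real.exp (-(x - 0)^2 / (2 * ((1:NNReal):ℝ)))
          ≤ 1 * Real.exp (-(x - 0)^2 / (2 * ((1:NNReal):ℝ))) := by gcongr
        _ = Real.exp (-(1/2) * x^2) := by rw [one_mul, hexp]
    calc ‖|x| * (gaussianPDF 0 1 x).toReal‖
          = |x| * (gaussianPDF 0 1 x).toReal := by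
            rw [Real.norm_eq_abs, abs_of_nonneg (mul_nonneg (abs_nonneg x) ENNReal.toReal_nonneg)]
      _ ≤ |x| * Real.exp (-(1/2)*x^2) := mul_le_mul_of_nonneg_left hpdf (abs_nonneg x)
      _ = ‖x * Real.exp (-(1/2)*x^2)‖ := by
          rw [Real.norm_eq_abs, abs_mul, abs_of_nonneg (Real.exp_nonneg _)]
      _ ≤ ‖|x * Real.exp (-(1/2)*x^2)|‖ := le_abs_self _

lemma int_abs_fst : Integrable (fun p : ℝ × ℝ × ℝ => |p.1|) gauss3 := by
  have h := integrable_abs_gauss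
  rw [← map_fst_gauss3] at h
  exact h.comp_measurable measurable_fst

lemma int_abs_snd_fst : Integrable (fun p : ℝ × ℝ × ℝ => |p.2.1|) gauss3 := by
  have h := integrable_abs_gauss
  have h2 : Integrable (fun q : ℝ × ℝ => |q.1|) ((gaussianReal 0 1).prod (gaussianReal 0 1)) := by
    have hm : Measure.map Prod.fst ((gaussianReal 0 1).prod (gaussianReal 0 1)) =
        gaussianReal 0 1 := by rw [Measure.map_fst_prod]; simp
    rw [← hm] at h
    exact h.comp_measurable measurable_fst
  rw [← map_snd_gauss3] at h2
  exact h2.comp_measurable measurable_snd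

lemma int_abs_snd_snd : Integrable (fun p : ℝ × ℝ × ℝ => |p.2.2|) gauss3 := by
  have h := integrable_abs_gauss
  have h2 : Integrable (fun q : ℝ × ℝ => |q.2|) ((gaussianReal 0 1).prod (gaussianReal 0 1)) := by
    have hm : Measure.map Prod.snd ((gaussianReal 0 1).prod (gaussianReal 0 1)) =
        gaussianReal 0 1 := by rw [Measure.map_snd_prod]; simp
    rw [← hm] at h
    exact h.comp_measurable measurable_snd
  rw [← map_snd_gauss3] at h2
  exact h2.comp_measurable measurable_snd

lemma div_sqrt_le (t s : ℝ) (ht : 0 ≤ t) (hs : 0 ≤ s) :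
    t / Real.sqrt (t + s) ≤ Real.sqrt t := by
  rcases eq_or_lt_of_le ht with h | h
  · simp [← h]
  · have h1 : Real.sqrt t ≤ Real.sqrt (t + s) := Real.sqrt_le_sqrt (by linarith)
    have h2 : 0 < Real.sqrt t := Real.sqrt_pos.2 h
    calc t / Real.sqrt (t + s) ≤ t / Real.sqrt t := by
          apply div_le_div_of_nonneg_left ht h2 h1
      _ = Real.sqrt t := Real.div_sqrt

lemma meas_sq1 (α : ℝ) : Measurable (fun p : ℝ × ℝ × ℝ => α^2*p.1^2) :=
  (measurable_fst.pow_const 2).const_mul _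

lemma meas_sq2 (β : ℝ) : Measurable (fun p : ℝ × ℝ × ℝ => β^2*p.2.1^2) :=
  ((measurable_fst.comp measurable_snd).pow_const 2).const_mul _

lemma meas_sq3 (γ : ℝ) : Measurable (fun p : ℝ × ℝ × ℝ => γ^2*p.2.2^2) :=
  ((measurable_snd.comp measurable_snd).pow_const 2).const_mul _

lemma meas_term (α β γ : ℝ) (f : ℝ × ℝ × ℝ → ℝ) (hf : Measurable f) :
    Measurable (fun p : ℝ × ℝ × ℝ =>
      f p / Real.sqrt (α^2*p.1^2 + β^2*p.2.1^2 + γ^2*p.2.2^2)) := by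
  apply hf.div
  exact Real.continuous_sqrt.measurable.comp (((meas_sq1 α).add (meas_sq2 β)).add (meas_sq3 γ))

lemma term_nonneg_bound (α : ℝ) (t s : ℝ) (hs : 0 ≤ s) (x : ℝ) (ht : t = α^2*x^2) :
    ‖t / Real.sqrt (t + s)‖ ≤ ‖|α| * |x|‖ := by
  subst ht
  have h0 : (0:ℝ) ≤ α^2*x^2 := by positivity
  have hnn : 0 ≤ α^2*x^2 / Real.sqrt (α^2*x^2 + s) := by positivity
  rw [Real.norm_eq_abs, Real.norm_eq_abs, abs_of_nonneg hnn,
    abs_of_nonneg (by positivity : (0:ℝ) ≤ |α| * |x|)]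
  calc α^2*x^2 / Real.sqrt (α^2*x^2 + s) ≤ Real.sqrt (α^2*x^2) := div_sqrt_le _ _ h0 hs
    _ = |α| * |x| := by
        rw [show α^2*x^2 = (α*x)^2 by ring, Real.sqrt_sq_eq_abs, abs_mul]

lemma integrable_div1 (α β γ : ℝ) : Integrable
    (fun p : ℝ × ℝ × ℝ => α^2*p.1^2 / Real.sqrt (α^2*p.1^2 + β^2*p.2.1^2 + γ^2*p.2.2^2))
    gauss3 := by
  apply Integrable.mono (int_abs_fst.const_mul |α|)
  · exact (meas_term α β γ _ (meas_sq1 α)).aestronglyMeasurable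
  · filter_upwards with p
    rw [add_assoc]
    exact term_nonneg_bound α _ _ (by positivity) p.1 rfl

lemma integrable_div2 (α β γ : ℝ) : Integrable
    (fun p : ℝ × ℝ × ℝ => β^2*p.2.1^2 / Real.sqrt (α^2*p.1^2 + β^2*p.2.1^2 + γ^2*p.2.2^2))
    gauss3 := by
  apply Integrable.mono (int_abs_snd_fst.const_mul |β|)
  · exact (meas_term α β γ _ (meas_sq2 β)).aestronglyMeasurable
  · filter_upwards with p
    rw [show α^2*p.1^2 + β^2*p.2.1^2 + γ^2*p.2.2^2
      = β^2*p.2.1^2 + (α^2*p.1^2 + γ^2*p.2.2^2) by ring]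
    exact term_nonneg_bound β _ _ (by positivity) p.2.1 rfl

lemma integrable_div3 (α β γ : ℝ) : Integrable
    (fun p : ℝ × ℝ × ℝ => γ^2*p.2.2^2 / Real.sqrt (α^2*p.1^2 + β^2*p.2.1^2 + γ^2*p.2.2^2))
    gauss3 := by
  apply Integrable.mono (int_abs_snd_snd.const_mul |γ|)
  · exact (meas_term α β γ _ (meas_sq3 γ)).aestronglyMeasurable
  · filter_upwards with p
    rw [show α^2*p.1^2 + β^2*p.2.1^2 + γ^2*p.2.2^2
      = γ^2*p.2.2^2 + (α^2*p.1^2 + β^2*p.2.1^2) by ring]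
    exact term_nonneg_bound γ _ _ (by positivity) p.2.2 rfl

/-! ### Symmetrization lemmas -/

lemma sym_nonneg {ψ : ℝ × ℝ × ℝ → ℝ} {e : (ℝ × ℝ × ℝ) ≃ᵐ (ℝ × ℝ × ℝ)}
    (hmp : MeasurePreserving e gauss3 gauss3) (hint : Integrable ψ gauss3)
    (hpt : ∀ p, 0 ≤ ψ p + ψ (e p)) : 0 ≤ ∫ p, ψ p ∂gauss3 := by
  have h1 : ∫ p, ψ (e p) ∂gauss3 = ∫ p, ψ p ∂gauss3 := hmp.integral_comp' ψ
  have h2 : Integrable (fun p => ψ (e p)) gauss3 :=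
    (hmp.integrable_comp_emb e.measurableEmbedding).2 hint
  have h3 : 0 ≤ ∫ p, (ψ p + ψ (e p)) ∂gauss3 := integral_nonneg hpt
  rw [integral_add hint h2] at h3
  linarith

lemma sym_pos {ψ : ℝ × ℝ × ℝ → ℝ} {e : (ℝ × ℝ × ℝ) ≃ᵐ (ℝ × ℝ × ℝ)}
    (hmp : MeasurePreserving e gauss3 gauss3) (hint : Integrable ψ gauss3)
    (hpt : ∀ p, 0 ≤ ψ p + ψ (e p)) {S : Set (ℝ × ℝ × ℝ)}
    (hS : ∀ p ∈ S, 0 < ψ p + ψ (e p)) (hSc : gauss3 Sᶜ = 0) :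
    0 < ∫ p, ψ p ∂gauss3 := by
  have h2 : Integrable (fun p => ψ (e p)) gauss3 :=
    (hmp.integrable_comp_emb e.measurableEmbedding).2 hint
  have hadd : Integrable (fun p => ψ p + ψ (e p)) gauss3 := hint.add h2
  have hpos : 0 < ∫ p, (ψ p + ψ (e p)) ∂gauss3 := by
    rw [integral_pos_iff_support_of_nonneg_ae (ae_of_all _ hpt) hadd]
    have hsub : S ⊆ Function.support (fun p => ψ p + ψ (e p)) := fun p hp => (hS p hp).ne'
    have hcompl : gauss3 (Function.support (fun p => ψ p + ψ (e p)))ᶜ = 0 :=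
      measure_mono_null (Set.compl_subset_compl.2 hsub) hSc
    by_contra h
    push_neg at h
    have h0 : gauss3 (Function.support (fun p => ψ p + ψ (e p))) = 0 :=
      le_antisymm h zero_le
    have hle := measure_union_le (μ := gauss3)
      (Function.support (fun p => ψ p + ψ (e p)))
      (Function.support (fun p => ψ p + ψ (e p)))ᶜ
    rw [Set.union_compl_self, h0, hcompl] at hle
    simp [measure_univ] at hle
  rw [integral_add hint h2, hmp.integral_comp' ψ] at hpos
  linarith

theorem stmt_2 (a b c : ℝ) (hab : a ≥ b) (hbc : b ≥ c) (hc : c > 0) :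
    Gfun a b c ≥ Gfun b a c ∧ Gfun b a c ≥ Gfun c a b ∧
      (Gfun a b c = Gfun b a c ↔ a = b) ∧ (Gfun b a c = Gfun c a b ↔ b = c) := by
  have hb : 0 < b := lt_of_lt_of_le hc hbc
  have ha : 0 < a := lt_of_lt_of_le hb hab
  have hGa : Gfun a b c = ∫ p : ℝ × ℝ × ℝ,
      a ^ 2 * p.1 ^ 2 / Real.sqrt (a ^ 2 * p.1 ^ 2 + b ^ 2 * p.2.1 ^ 2 + c ^ 2 * p.2.2 ^ 2)
      ∂gauss3 := rfl
  have hGb : Gfun b a c = ∫ p : ℝ × ℝ × ℝ,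
      b ^ 2 * p.2.1 ^ 2 / Real.sqrt (a ^ 2 * p.1 ^ 2 + b ^ 2 * p.2.1 ^ 2 + c ^ 2 * p.2.2 ^ 2)
      ∂gauss3 := by
    have e1 := (mp_e12.integral_comp' (fun q : ℝ × ℝ × ℝ =>
      b ^ 2 * q.1 ^ 2 / Real.sqrt (b ^ 2 * q.1 ^ 2 + a ^ 2 * q.2.1 ^ 2 + c ^ 2 * q.2.2 ^ 2))).symm
    refine e1.trans ?_
    apply integral_congr_ae
    filter_upwards with p
    simp only [e12_apply]
    rw [show b ^ 2 * p.2.1 ^ 2 + a ^ 2 * p.1 ^ 2 + c ^ 2 * p.2.2 ^ 2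
      = a ^ 2 * p.1 ^ 2 + b ^ 2 * p.2.1 ^ 2 + c ^ 2 * p.2.2 ^ 2 from by ring]
  have hGc : Gfun c a b = ∫ p : ℝ × ℝ × ℝ,
      c ^ 2 * p.2.2 ^ 2 / Real.sqrt (a ^ 2 * p.1 ^ 2 + b ^ 2 * p.2.1 ^ 2 + c ^ 2 * p.2.2 ^ 2)
      ∂gauss3 := by
    have e1 := (mp_e132.integral_comp' (fun q : ℝ × ℝ × ℝ =>
      c ^ 2 * q.1 ^ 2 / Real.sqrt (c ^ 2 * q.1 ^ 2 + a ^ 2 * q.2.1 ^ 2 + b ^ 2 * q.2.2 ^ 2))).symm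
    refine e1.trans ?_
    apply integral_congr_ae
    filter_upwards with p
    simp only [e132_apply]
    rw [show c ^ 2 * p.2.2 ^ 2 + a ^ 2 * p.1 ^ 2 + b ^ 2 * p.2.1 ^ 2
      = a ^ 2 * p.1 ^ 2 + b ^ 2 * p.2.1 ^ 2 + c ^ 2 * p.2.2 ^ 2 from by ring]
  -- first pair
  have hint1 : Integrable (fun p : ℝ × ℝ × ℝ =>
      (a ^ 2 * p.1 ^ 2 - b ^ 2 * p.2.1 ^ 2) /
      Real.sqrt (a ^ 2 * p.1 ^ 2 + b ^ 2 * p.2.1 ^ 2 + c ^ 2 * p.2.2 ^ 2)) gauss3 :=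
    ((integrable_div1 a b c).sub (integrable_div2 a b c)).congr
      (ae_of_all _ fun p => div_sub_div_same _ _ _)
  have hdiff1 : Gfun a b c - Gfun b a c = ∫ p : ℝ × ℝ × ℝ,
      (a ^ 2 * p.1 ^ 2 - b ^ 2 * p.2.1 ^ 2) /
      Real.sqrt (a ^ 2 * p.1 ^ 2 + b ^ 2 * p.2.1 ^ 2 + c ^ 2 * p.2.2 ^ 2) ∂gauss3 := by
    rw [hGa, hGb, ← integral_sub (integrable_div1 a b c) (integrable_div2 a b c)]
    apply integral_congr_ae
    filter_upwards with p
    exact div_sub_div_same _ _ _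
  have hpt1 : ∀ p : ℝ × ℝ × ℝ,
      0 ≤ (a ^ 2 * p.1 ^ 2 - b ^ 2 * p.2.1 ^ 2) /
        Real.sqrt (a ^ 2 * p.1 ^ 2 + b ^ 2 * p.2.1 ^ 2 + c ^ 2 * p.2.2 ^ 2) +
        (a ^ 2 * (e12 p).1 ^ 2 - b ^ 2 * (e12 p).2.1 ^ 2) /
        Real.sqrt (a ^ 2 * (e12 p).1 ^ 2 + b ^ 2 * (e12 p).2.1 ^ 2 + c ^ 2 * (e12 p).2.2 ^ 2) := by
    intro p
    simp only [e12_apply]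
    exact keyLem (a ^ 2) (b ^ 2) (p.1 ^ 2) (p.2.1 ^ 2) (c ^ 2 * p.2.2 ^ 2)
      (by positivity) (by nlinarith) (sq_nonneg _) (sq_nonneg _) (by positivity)
  have hge1 : 0 ≤ ∫ p : ℝ × ℝ × ℝ,
      (a ^ 2 * p.1 ^ 2 - b ^ 2 * p.2.1 ^ 2) /
      Real.sqrt (a ^ 2 * p.1 ^ 2 + b ^ 2 * p.2.1 ^ 2 + c ^ 2 * p.2.2 ^ 2) ∂gauss3 :=
    sym_nonneg mp_e12 hint1 hpt1
  -- second pair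
  have hint2 : Integrable (fun p : ℝ × ℝ × ℝ =>
      (b ^ 2 * p.2.1 ^ 2 - c ^ 2 * p.2.2 ^ 2) /
      Real.sqrt (a ^ 2 * p.1 ^ 2 + b ^ 2 * p.2.1 ^ 2 + c ^ 2 * p.2.2 ^ 2)) gauss3 :=
    ((integrable_div2 a b c).sub (integrable_div3 a b c)).congr
      (ae_of_all _ fun p => div_sub_div_same _ _ _)
  have hdiff2 : Gfun b a c - Gfun c a b = ∫ p : ℝ × ℝ × ℝ,
      (b ^ 2 * p.2.1 ^ 2 - c ^ 2 * p.2.2 ^ 2) /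
      Real.sqrt (a ^ 2 * p.1 ^ 2 + b ^ 2 * p.2.1 ^ 2 + c ^ 2 * p.2.2 ^ 2) ∂gauss3 := by
    rw [hGb, hGc, ← integral_sub (integrable_div2 a b c) (integrable_div3 a b c)]
    apply integral_congr_ae
    filter_upwards with p
    exact div_sub_div_same _ _ _
  have hpt2 : ∀ p : ℝ × ℝ × ℝ,
      0 ≤ (b ^ 2 * p.2.1 ^ 2 - c ^ 2 * p.2.2 ^ 2) /
        Real.sqrt (a ^ 2 * p.1 ^ 2 + b ^ 2 * p.2.1 ^ 2 + c ^ 2 * p.2.2 ^ 2) +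
        (b ^ 2 * (e23 p).2.1 ^ 2 - c ^ 2 * (e23 p).2.2 ^ 2) /
        Real.sqrt (a ^ 2 * (e23 p).1 ^ 2 + b ^ 2 * (e23 p).2.1 ^ 2 + c ^ 2 * (e23 p).2.2 ^ 2) := by
    intro p
    simp only [e23_apply]
    have hk := keyLem (b ^ 2) (c ^ 2) (p.2.1 ^ 2) (p.2.2 ^ 2) (a ^ 2 * p.1 ^ 2)
      (by positivity) (by nlinarith) (sq_nonneg _) (sq_nonneg _) (by positivity)
    rw [show b ^ 2 * p.2.1 ^ 2 + c ^ 2 * p.2.2 ^ 2 + a ^ 2 * p.1 ^ 2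
        = a ^ 2 * p.1 ^ 2 + b ^ 2 * p.2.1 ^ 2 + c ^ 2 * p.2.2 ^ 2 from by ring,
      show b ^ 2 * p.2.2 ^ 2 + c ^ 2 * p.2.1 ^ 2 + a ^ 2 * p.1 ^ 2
        = a ^ 2 * p.1 ^ 2 + b ^ 2 * p.2.2 ^ 2 + c ^ 2 * p.2.1 ^ 2 from by ring] at hk
    exact hk
  have hge2 : 0 ≤ ∫ p : ℝ × ℝ × ℝ,
      (b ^ 2 * p.2.1 ^ 2 - c ^ 2 * p.2.2 ^ 2) /
      Real.sqrt (a ^ 2 * p.1 ^ 2 + b ^ 2 * p.2.1 ^ 2 + c ^ 2 * p.2.2 ^ 2) ∂gauss3 :=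
    sym_nonneg mp_e23 hint2 hpt2
  refine ⟨by rw [ge_iff_le, ← sub_nonneg, hdiff1]; exact hge1,
    by rw [ge_iff_le, ← sub_nonneg, hdiff2]; exact hge2, ?_, ?_⟩
  · constructor
    · intro heq
      by_contra hne
      have hlt : b < a := lt_of_le_of_ne hab (fun h => hne h.symm)
      have hS : ∀ p ∈ {p : ℝ × ℝ × ℝ | p.1 ≠ 0 ∧ p.2.1 ≠ 0},
          (0:ℝ) < (a ^ 2 * p.1 ^ 2 - b ^ 2 * p.2.1 ^ 2) /
            Real.sqrt (a ^ 2 * p.1 ^ 2 + b ^ 2 * p.2.1 ^ 2 + c ^ 2 * p.2.2 ^ 2) +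
            (a ^ 2 * (e12 p).1 ^ 2 - b ^ 2 * (e12 p).2.1 ^ 2) /
            Real.sqrt (a ^ 2 * (e12 p).1 ^ 2 + b ^ 2 * (e12 p).2.1 ^ 2 + c ^ 2 * (e12 p).2.2 ^ 2) := by
        intro p hp
        simp only [e12_apply]
        exact keyStrict (a ^ 2) (b ^ 2) (p.1 ^ 2) (p.2.1 ^ 2) (c ^ 2 * p.2.2 ^ 2)
          (by positivity) (by nlinarith)
          (lt_of_le_of_ne (sq_nonneg _) (Ne.symm (pow_ne_zero 2 hp.1)))
          (lt_of_le_of_ne (sq_nonneg _) (Ne.symm (pow_ne_zero 2 hp.2)))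
          (by positivity)
      have hSc : gauss3 {p : ℝ × ℝ × ℝ | p.1 ≠ 0 ∧ p.2.1 ≠ 0}ᶜ = 0 := by
        have hsub : {p : ℝ × ℝ × ℝ | p.1 ≠ 0 ∧ p.2.1 ≠ 0}ᶜ ⊆
            {p : ℝ × ℝ × ℝ | p.1 = 0} ∪ {p : ℝ × ℝ × ℝ | p.2.1 = 0} := by
          intro p hp
          simp only [Set.mem_compl_iff, Set.mem_setOf_eq, not_and_or, not_not] at hp
          simpa using hp
        refine measure_mono_null hsub ?_
        refine le_antisymm (le_trans (measure_union_le _ _) ?_) zero_le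
        rw [gauss3_fst_zero, gauss3_snd_fst_zero]; simp
      have hpos := sym_pos mp_e12 hint1 hpt1 hS hSc
      rw [← hdiff1] at hpos
      rw [heq] at hpos
      simp at hpos
    · intro h; rw [h]
  · constructor
    · intro heq
      by_contra hne
      have hlt : c < b := lt_of_le_of_ne hbc (fun h => hne h.symm)
      have hS : ∀ p ∈ {p : ℝ × ℝ × ℝ | p.2.1 ≠ 0 ∧ p.2.2 ≠ 0},
          (0:ℝ) < (b ^ 2 * p.2.1 ^ 2 - c ^ 2 * p.2.2 ^ 2) /
            Real.sqrt (a ^ 2 * p.1 ^ 2 + b ^ 2 * p.2.1 ^ 2 + c ^ 2 * p.2.2 ^ 2) +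
            (b ^ 2 * (e23 p).2.1 ^ 2 - c ^ 2 * (e23 p).2.2 ^ 2) /
            Real.sqrt (a ^ 2 * (e23 p).1 ^ 2 + b ^ 2 * (e23 p).2.1 ^ 2 + c ^ 2 * (e23 p).2.2 ^ 2) := by
        intro p hp
        simp only [e23_apply]
        have hk := keyStrict (b ^ 2) (c ^ 2) (p.2.1 ^ 2) (p.2.2 ^ 2) (a ^ 2 * p.1 ^ 2)
          (by positivity) (by nlinarith)
          (lt_of_le_of_ne (sq_nonneg _) (Ne.symm (pow_ne_zero 2 hp.1)))
          (lt_of_le_of_ne (sq_nonneg _) (Ne.symm (pow_ne_zero 2 hp.2)))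
          (by positivity)
        rw [show b ^ 2 * p.2.1 ^ 2 + c ^ 2 * p.2.2 ^ 2 + a ^ 2 * p.1 ^ 2
            = a ^ 2 * p.1 ^ 2 + b ^ 2 * p.2.1 ^ 2 + c ^ 2 * p.2.2 ^ 2 from by ring,
          show b ^ 2 * p.2.2 ^ 2 + c ^ 2 * p.2.1 ^ 2 + a ^ 2 * p.1 ^ 2
            = a ^ 2 * p.1 ^ 2 + b ^ 2 * p.2.2 ^ 2 + c ^ 2 * p.2.1 ^ 2 from by ring] at hk
        exact hk
      have hSc : gauss3 {p : ℝ × ℝ × ℝ | p.2.1 ≠ 0 ∧ p.2.2 ≠ 0}ᶜ = 0 := by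
        have hsub : {p : ℝ × ℝ × ℝ | p.2.1 ≠ 0 ∧ p.2.2 ≠ 0}ᶜ ⊆
            {p : ℝ × ℝ × ℝ | p.2.1 = 0} ∪ {p : ℝ × ℝ × ℝ | p.2.2 = 0} := by
          intro p hp
          simp only [Set.mem_compl_iff, Set.mem_setOf_eq, not_and_or, not_not] at hp
          simpa using hp
        refine measure_mono_null hsub ?_
        refine le_antisymm (le_trans (measure_union_le _ _) ?_) zero_le
        rw [gauss3_snd_fst_zero, gauss3_snd_snd_zero]; simp
      have hpos := sym_pos mp_e23 hint2 hpt2 hS hSc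
      rw [← hdiff2] at hpos
      rw [heq] at hpos
      simp at hpos
    · intro h; rw [h]
end

section
/- For positive reals a, b, c with a > b > c (pairwise distinct), the integral ∫_ℝ ∫_ℝ (s²t²-1) / [(a²s²+1)(b²s²+1)(c²s²+1)(t²/a²+1)(t²/b²+1)(t²/c²+1)]^{3/2} dt ds is nonzero (in fact strictly negative). -/
open MeasureTheory Set Real

lemma aux_integrable {d : ℝ} (hd : 0 < d) {G : ℝ → ℝ}
    (hG : Continuous G) (hGlb : ∀ x, (d * x ^ 2 + 1) ^ 3 ≤ G x) (k : ℕ) (hk : k ≤ 7) :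
    Integrable (fun x : ℝ => x ^ k / (G x) ^ (3/2 : ℝ)) := by
  have hGpos : ∀ x, 0 < G x := fun x => lt_of_lt_of_le (by positivity) (hGlb x)
  have hsd : (0:ℝ) < Real.sqrt d := Real.sqrt_pos.mpr hd
  have hmaj : Integrable (fun x : ℝ => ((Real.sqrt d) ^ k)⁻¹ * (1 + (Real.sqrt d * x) ^ 2)⁻¹) :=
    (integrable_inv_one_add_sq.comp_mul_left' hsd.ne').const_mul _
  refine hmaj.mono' ?_ (Filter.Eventually.of_forall fun x => ?_)
  · exact (Continuous.div (continuous_pow k)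
      (hG.rpow_const fun x => Or.inr (by norm_num))
      (fun x => (Real.rpow_pos_of_pos (hGpos x) _).ne')).aestronglyMeasurable
  · set u := d * x ^ 2 + 1 with hu
    have hu1 : (1:ℝ) ≤ u := by nlinarith [sq_nonneg x]
    have hu0 : (0:ℝ) < u := by linarith
    have hunorm : (1:ℝ) + (Real.sqrt d * x) ^ 2 = u := by
      rw [mul_pow, Real.sq_sqrt hd.le]; ring
    rw [hunorm]
    have hnorm : ‖x ^ k / G x ^ (3/2:ℝ)‖ = |x| ^ k / G x ^ (3/2:ℝ) := by
      rw [norm_div, norm_pow, Real.norm_eq_abs, Real.norm_eq_abs,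
        abs_of_pos (Real.rpow_pos_of_pos (hGpos x) _)]
    rw [hnorm]
    -- |x|^k ≤ (√u / √d)^k
    have h1 : |x| ≤ Real.sqrt u / Real.sqrt d := by
      rw [le_div_iff₀ hsd, mul_comm]
      calc Real.sqrt d * |x| = Real.sqrt (d * x ^ 2) := by
            rw [Real.sqrt_mul hd.le, Real.sqrt_sq_eq_abs]
        _ ≤ Real.sqrt u := Real.sqrt_le_sqrt (by linarith)
    have h2 : |x| ^ k ≤ (Real.sqrt u) ^ k / (Real.sqrt d) ^ k := by
      rw [← div_pow]
      exact pow_le_pow_left₀ (abs_nonneg x) h1 k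
    -- (√u)^k = u ^ ((k:ℝ)/2)
    have h3 : (Real.sqrt u) ^ k = u ^ ((k:ℝ)/2) := by
      rw [Real.sqrt_eq_rpow, ← Real.rpow_natCast (u ^ ((1:ℝ)/2)) k, ← Real.rpow_mul hu0.le]
      ring_nf
    -- G x ^ (3/2) ≥ u ^ (9/2)
    have h4 : u ^ ((9:ℝ)/2) ≤ G x ^ (3/2:ℝ) := by
      calc u ^ ((9:ℝ)/2) = (u ^ 3) ^ (3/2:ℝ) := by
            rw [← Real.rpow_natCast u 3, ← Real.rpow_mul hu0.le]; norm_num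
        _ ≤ G x ^ (3/2:ℝ) := Real.rpow_le_rpow (by positivity) (hGlb x) (by norm_num)
    have h5 : |x| ^ k / G x ^ (3/2:ℝ) ≤ (u ^ ((k:ℝ)/2) / (Real.sqrt d) ^ k) / u ^ ((9:ℝ)/2) := by
      apply div_le_div₀ (by positivity) _ (by positivity) h4
      rw [← h3]; exact h2
    refine h5.trans ?_
    have h6 : (u ^ ((k:ℝ)/2) / (Real.sqrt d) ^ k) / u ^ ((9:ℝ)/2)
        = ((Real.sqrt d) ^ k)⁻¹ * u ^ ((k:ℝ)/2 - 9/2) := by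
      rw [Real.rpow_sub hu0]; ring
    rw [h6]
    gcongr
    calc u ^ ((k:ℝ)/2 - 9/2) ≤ u ^ ((-1:ℝ)) := by
          apply Real.rpow_le_rpow_of_exponent_le hu1
          have : (k:ℝ) ≤ 7 := by exact_mod_cast hk
          linarith
      _ = u⁻¹ := Real.rpow_neg_one u

lemma aux_cheb {W : ℝ → ℝ} (hW : ∀ x, 0 < W x)
    (h0 : Integrable (fun x : ℝ => 1 / W x))
    (h2 : Integrable (fun x : ℝ => x ^ 2 / W x))
    (h5 : Integrable (fun x : ℝ => x ^ 5 / W x))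
    (h7 : Integrable (fun x : ℝ => x ^ 7 / W x)) :
    (∫ x in Ioi (0:ℝ), x ^ 2 / W x) * (∫ x in Ioi (0:ℝ), x ^ 5 / W x)
      < (∫ x in Ioi (0:ℝ), 1 / W x) * (∫ x in Ioi (0:ℝ), x ^ 7 / W x) := by
  set μ := (volume : Measure ℝ).restrict (Ioi (0:ℝ)) with hμ
  have r0 : Integrable (fun x : ℝ => 1 / W x) μ := h0.restrict
  have r2 : Integrable (fun x : ℝ => x ^ 2 / W x) μ := h2.restrict
  have r5 : Integrable (fun x : ℝ => x ^ 5 / W x) μ := h5.restrict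
  have r7 : Integrable (fun x : ℝ => x ^ 7 / W x) μ := h7.restrict
  set H : ℝ × ℝ → ℝ := fun p =>
    (p.1 ^ 2 - p.2 ^ 2) * (p.1 ^ 5 - p.2 ^ 5) / (W p.1 * W p.2) with hH
  have hHeq : H = fun p : ℝ × ℝ =>
      (p.1 ^ 7 / W p.1) * (1 / W p.2) + (1 / W p.1) * (p.2 ^ 7 / W p.2)
      - (p.1 ^ 2 / W p.1) * (p.2 ^ 5 / W p.2) - (p.1 ^ 5 / W p.1) * (p.2 ^ 2 / W p.2) := by
    funext p
    have h1 := (hW p.1).ne'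
    have h2 := (hW p.2).ne'
    simp only [hH]
    field_simp
    ring
  have i1 := (r7.mul_prod r0)
  have i2 := (r0.mul_prod r7)
  have i3 := (r2.mul_prod r5)
  have i4 := (r5.mul_prod r2)
  have i12 : Integrable (fun z : ℝ × ℝ =>
      z.1 ^ 7 / W z.1 * (1 / W z.2) + 1 / W z.1 * (z.2 ^ 7 / W z.2)) (μ.prod μ) := i1.add i2
  have i123 : Integrable (fun z : ℝ × ℝ =>
      z.1 ^ 7 / W z.1 * (1 / W z.2) + 1 / W z.1 * (z.2 ^ 7 / W z.2)
        - z.1 ^ 2 / W z.1 * (z.2 ^ 5 / W z.2)) (μ.prod μ) := i12.sub i3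
  have hHint : Integrable H (μ.prod μ) := by
    rw [hHeq]; exact i123.sub i4
  have hint : ∫ p, H p ∂(μ.prod μ)
      = (∫ x in Ioi (0:ℝ), x ^ 7 / W x) * (∫ x in Ioi (0:ℝ), 1 / W x)
        + (∫ x in Ioi (0:ℝ), 1 / W x) * (∫ x in Ioi (0:ℝ), x ^ 7 / W x)
        - (∫ x in Ioi (0:ℝ), x ^ 2 / W x) * (∫ x in Ioi (0:ℝ), x ^ 5 / W x)
        - (∫ x in Ioi (0:ℝ), x ^ 5 / W x) * (∫ x in Ioi (0:ℝ), x ^ 2 / W x) := by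
    rw [hHeq, integral_sub i123 i4, integral_sub i12 i3,
      integral_add i1 i2,
      integral_prod_mul (fun x : ℝ => x ^ 7 / W x) (fun x : ℝ => 1 / W x),
      integral_prod_mul (fun x : ℝ => 1 / W x) (fun x : ℝ => x ^ 7 / W x),
      integral_prod_mul (fun x : ℝ => x ^ 2 / W x) (fun x : ℝ => x ^ 5 / W x),
      integral_prod_mul (fun x : ℝ => x ^ 5 / W x) (fun x : ℝ => x ^ 2 / W x)]
  have hpos : 0 < ∫ p, H p ∂(μ.prod μ) := by
    have hnn : 0 ≤ᵐ[μ.prod μ] H := by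
      rw [hμ, Measure.prod_restrict]
      refine (ae_restrict_iff' (measurableSet_Ioi.prod measurableSet_Ioi)).mpr
        (Filter.Eventually.of_forall ?_)
      rintro ⟨x, y⟩ ⟨hx, hy⟩
      simp only [Pi.zero_apply, hH]
      have hx : (0:ℝ) < x := hx
      have hy : (0:ℝ) < y := hy
      apply div_nonneg _ (le_of_lt (mul_pos (hW x) (hW y)))
      rcases le_total x y with h | h
      · have h2 : x ^ 2 ≤ y ^ 2 := pow_le_pow_left₀ hx.le h 2
        have h5 : x ^ 5 ≤ y ^ 5 := pow_le_pow_left₀ hx.le h 5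
        nlinarith
      · have h2 : y ^ 2 ≤ x ^ 2 := pow_le_pow_left₀ hy.le h 2
        have h5 : y ^ 5 ≤ x ^ 5 := pow_le_pow_left₀ hy.le h 5
        nlinarith
    rw [integral_pos_iff_support_of_nonneg_ae hnn hHint]
    have hsub : Ioo (1:ℝ) 2 ×ˢ Ioo (3:ℝ) 4 ⊆ Function.support H := by
      rintro ⟨x, y⟩ ⟨hx, hy⟩
      simp only [Function.mem_support, hH]
      have hx1 : (1:ℝ) < x := hx.1
      have hx2 : x < 2 := hx.2
      have hy3 : (3:ℝ) < y := hy.1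
      have hy4 : y < 4 := hy.2
      have k2 : x ^ 2 < y ^ 2 := by nlinarith
      have hnum : 0 < (x ^ 2 - y ^ 2) * (x ^ 5 - y ^ 5) := by
        have k5 : x ^ 5 < y ^ 5 := by
          calc x ^ 5 < 2 ^ 5 := pow_lt_pow_left₀ hx2 (by linarith) (by norm_num)
            _ ≤ 3 ^ 5 := by norm_num
            _ ≤ y ^ 5 := pow_le_pow_left₀ (by norm_num) hy3.le 5
        apply mul_pos_of_neg_of_neg <;> linarith
      exact ne_of_gt (div_pos hnum (mul_pos (hW x) (hW y)))
    calc (0:ENNReal) < 1 := by norm_num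
      _ = (μ.prod μ) (Ioo (1:ℝ) 2 ×ˢ Ioo (3:ℝ) 4) := by
          rw [Measure.prod_prod, hμ, Measure.restrict_apply measurableSet_Ioo,
            Measure.restrict_apply measurableSet_Ioo,
            show Ioo (1:ℝ) 2 ∩ Ioi 0 = Ioo 1 2 from
              inter_eq_self_of_subset_left (fun z hz => lt_trans one_pos hz.1),
            show Ioo (3:ℝ) 4 ∩ Ioi 0 = Ioo 3 4 from
              inter_eq_self_of_subset_left (fun z hz => lt_trans (by norm_num) hz.1),
            Real.volume_Ioo, Real.volume_Ioo]
          norm_num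
      _ ≤ (μ.prod μ) (Function.support H) := measure_mono hsub
  rw [hint] at hpos
  nlinarith [hpos]

lemma aux_subst (a b c : ℝ) (ha : 0 < a) (hb : 0 < b) (hc : 0 < c)
    (m n : ℕ) (hmn : m + n = 7) :
    ∫ t in Ioi (0:ℝ), t ^ m / ((t^2/a^2+1) * (t^2/b^2+1) * (t^2/c^2+1)) ^ (3/2:ℝ)
      = (a*b*c)^3 * ∫ x in Ioi (0:ℝ),
          x ^ n / ((a^2*x^2+1) * (b^2*x^2+1) * (c^2*x^2+1)) ^ (3/2:ℝ) := by
  have key := integral_comp_rpow_Ioi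
    (fun t : ℝ => t ^ m / ((t^2/a^2+1) * (t^2/b^2+1) * (t^2/c^2+1)) ^ (3/2:ℝ))
    (p := -1) (by norm_num)
  rw [← key, ← integral_const_mul]
  refine setIntegral_congr_fun measurableSet_Ioi fun x hx => ?_
  have hx0 : (0:ℝ) < x := hx
  have hP : (0:ℝ) < (a^2*x^2+1) * (b^2*x^2+1) * (c^2*x^2+1) := by positivity
  have hPd : (0:ℝ) < ((a^2*x^2+1) * (b^2*x^2+1) * (c^2*x^2+1)) ^ (3/2:ℝ) :=
    Real.rpow_pos_of_pos hP _
  -- simplify rpow of x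
  rw [Real.rpow_neg_one]
  have hx2 : x ^ ((-1:ℝ) - 1) = (x^2)⁻¹ := by
    rw [show ((-1:ℝ) - 1) = -(2:ℕ) by norm_num, Real.rpow_neg hx0.le, Real.rpow_natCast]
  rw [hx2]
  -- Q(x⁻¹) = P x / ((a*b*c)^2 * x^6)
  have hbase : ((x⁻¹)^2/a^2+1) * ((x⁻¹)^2/b^2+1) * ((x⁻¹)^2/c^2+1)
      = ((a^2*x^2+1) * (b^2*x^2+1) * (c^2*x^2+1)) / ((a*b*c)^2 * x^6) := by
    field_simp
    ring
  have hden : (((a*b*c)^2 * x^6) : ℝ) ^ (3/2:ℝ) = (a*b*c)^3 * x^9 := by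
    have h1 : ((a*b*c)^2 * x^6 : ℝ) = ((a*b*c) * x^3)^2 := by ring
    rw [h1, ← Real.rpow_natCast ((a*b*c)*x^3) 2, ← Real.rpow_mul (by positivity)]
    norm_num
    ring
  have hQ : (((x⁻¹)^2/a^2+1) * ((x⁻¹)^2/b^2+1) * ((x⁻¹)^2/c^2+1)) ^ (3/2:ℝ)
      = ((a^2*x^2+1) * (b^2*x^2+1) * (c^2*x^2+1)) ^ (3/2:ℝ) / ((a*b*c)^3 * x^9) := by
    rw [hbase, Real.div_rpow hP.le (by positivity), hden]
  simp only [abs_neg, abs_one, one_mul, smul_eq_mul]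
  rw [hQ]
  have hxm : (x⁻¹) ^ m = (x ^ m)⁻¹ := inv_pow x m
  rw [hxm]
  have hx9 : x ^ 2 * x ^ m * x ^ n = x ^ 9 := by
    rw [← pow_add, ← pow_add]
    congr 1
    omega
  have hPd' : ((a^2*x^2+1) * (b^2*x^2+1) * (c^2*x^2+1)) ^ (3/2:ℝ) ≠ 0 := hPd.ne'
  rw [← hx9]
  have hxm0 : (x:ℝ) ^ m ≠ 0 := pow_ne_zero m hx0.ne'
  have hxn0 : (x:ℝ) ^ n ≠ 0 := pow_ne_zero n hx0.ne'
  field_simp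

noncomputable def PD (a b c x : ℝ) : ℝ :=
  ((a^2*x^2+1) * (b^2*x^2+1) * (c^2*x^2+1)) ^ (3/2:ℝ)

noncomputable def QD (a b c t : ℝ) : ℝ :=
  ((t^2/a^2+1) * (t^2/b^2+1) * (t^2/c^2+1)) ^ (3/2:ℝ)

theorem stmt_7 (a b c : ℝ) (hab : a > b) (hbc : b > c) (hc : c > 0) :
    (∫ s : ℝ, ∫ t : ℝ,
        (s ^ 2 * t ^ 2 - 1) /
          ((a ^ 2 * s ^ 2 + 1) * (b ^ 2 * s ^ 2 + 1) * (c ^ 2 * s ^ 2 + 1) *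
            (t ^ 2 / a ^ 2 + 1) * (t ^ 2 / b ^ 2 + 1) * (t ^ 2 / c ^ 2 + 1)) ^ (3 / 2 : ℝ)) < 0 := by
  have hb : 0 < b := lt_trans hc hbc
  have ha : 0 < a := lt_trans hb hab
  -- positivity of denominators
  have hPpos : ∀ x : ℝ, 0 < (a^2*x^2+1) * (b^2*x^2+1) * (c^2*x^2+1) := fun x => by positivity
  have hQpos : ∀ t : ℝ, 0 < (t^2/a^2+1) * (t^2/b^2+1) * (t^2/c^2+1) := fun t => by positivity
  have hPDpos : ∀ x : ℝ, 0 < PD a b c x := fun x => Real.rpow_pos_of_pos (hPpos x) _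
  have hQDpos : ∀ t : ℝ, 0 < QD a b c t := fun t => Real.rpow_pos_of_pos (hQpos t) _
  -- integrability on the P side
  have hca2 : c^2 ≤ a^2 := by nlinarith
  have hcb2 : c^2 ≤ b^2 := by nlinarith
  have hba2 : b^2 ≤ a^2 := by nlinarith
  have hPlb : ∀ x : ℝ, (c^2 * x^2 + 1)^3 ≤ (a^2*x^2+1) * (b^2*x^2+1) * (c^2*x^2+1) := by
    intro x
    have h1 : c^2*x^2+1 ≤ a^2*x^2+1 := by
      have := mul_le_mul_of_nonneg_right hca2 (sq_nonneg x); linarith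
    have h2 : c^2*x^2+1 ≤ b^2*x^2+1 := by
      have := mul_le_mul_of_nonneg_right hcb2 (sq_nonneg x); linarith
    calc (c^2*x^2+1)^3 = (c^2*x^2+1) * (c^2*x^2+1) * (c^2*x^2+1) := by ring
      _ ≤ (a^2*x^2+1) * (b^2*x^2+1) * (c^2*x^2+1) := by gcongr <;> positivity
  have hPcont : Continuous (fun x : ℝ => (a^2*x^2+1) * (b^2*x^2+1) * (c^2*x^2+1)) := by
    fun_prop
  have IP : ∀ k : ℕ, k ≤ 7 → Integrable (fun x : ℝ => x ^ k / PD a b c x) := by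
    intro k hk
    simpa [PD] using aux_integrable (by positivity : (0:ℝ) < c^2) hPcont hPlb k hk
  have IP0 : Integrable (fun x : ℝ => 1 / PD a b c x) :=
    (IP 0 (by norm_num)).congr (Filter.Eventually.of_forall fun x => by simp)
  -- integrability on the Q side
  have hQlb : ∀ t : ℝ, ((a^2)⁻¹ * t^2 + 1)^3 ≤ (t^2/a^2+1) * (t^2/b^2+1) * (t^2/c^2+1) := by
    intro t
    have h1 : t^2/a^2 ≤ t^2/b^2 := by
      apply div_le_div_of_nonneg_left (sq_nonneg t) (by positivity) hba2
    have h2 : t^2/a^2 ≤ t^2/c^2 := by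
      apply div_le_div_of_nonneg_left (sq_nonneg t) (by positivity) hca2
    calc ((a^2)⁻¹ * t^2 + 1)^3 = (t^2/a^2+1) * (t^2/a^2+1) * (t^2/a^2+1) := by
          rw [inv_mul_eq_div]; ring
      _ ≤ (t^2/a^2+1) * (t^2/b^2+1) * (t^2/c^2+1) := by gcongr <;> positivity
  have hQcont : Continuous (fun t : ℝ => (t^2/a^2+1) * (t^2/b^2+1) * (t^2/c^2+1)) := by
    fun_prop
  have IQ : ∀ k : ℕ, k ≤ 7 → Integrable (fun t : ℝ => t ^ k / QD a b c t) := by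
    intro k hk
    simpa [QD] using aux_integrable (by positivity : (0:ℝ) < (a^2)⁻¹) hQcont hQlb k hk
  have IQ2 : Integrable (fun t : ℝ => t ^ 2 / QD a b c t) := IQ 2 (by norm_num)
  have IQ0 : Integrable (fun t : ℝ => 1 / QD a b c t) :=
    (IQ 0 (by norm_num)).congr (Filter.Eventually.of_forall fun t => by simp)
  set C := ∫ t : ℝ, t ^ 2 / QD a b c t with hCdef
  set D := ∫ t : ℝ, 1 / QD a b c t with hDdef
  -- inner integral
  have inner : ∀ s : ℝ, (∫ t : ℝ,
      (s ^ 2 * t ^ 2 - 1) /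
          ((a ^ 2 * s ^ 2 + 1) * (b ^ 2 * s ^ 2 + 1) * (c ^ 2 * s ^ 2 + 1) *
            (t ^ 2 / a ^ 2 + 1) * (t ^ 2 / b ^ 2 + 1) * (t ^ 2 / c ^ 2 + 1)) ^ (3 / 2 : ℝ))
      = C * (s ^ 2 / PD a b c s) - D * (1 / PD a b c s) := by
    intro s
    have h1 : ∀ t : ℝ, (s ^ 2 * t ^ 2 - 1) /
          ((a ^ 2 * s ^ 2 + 1) * (b ^ 2 * s ^ 2 + 1) * (c ^ 2 * s ^ 2 + 1) *
            (t ^ 2 / a ^ 2 + 1) * (t ^ 2 / b ^ 2 + 1) * (t ^ 2 / c ^ 2 + 1)) ^ (3 / 2 : ℝ)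
        = (s ^ 2 * (t ^ 2 / QD a b c t) - 1 / QD a b c t) * (1 / PD a b c s) := by
      intro t
      have hbig : (a ^ 2 * s ^ 2 + 1) * (b ^ 2 * s ^ 2 + 1) * (c ^ 2 * s ^ 2 + 1) *
            (t ^ 2 / a ^ 2 + 1) * (t ^ 2 / b ^ 2 + 1) * (t ^ 2 / c ^ 2 + 1)
          = ((a^2*s^2+1) * (b^2*s^2+1) * (c^2*s^2+1)) *
            ((t^2/a^2+1) * (t^2/b^2+1) * (t^2/c^2+1)) := by ring
      have gen : ∀ X Y : ℝ, X ≠ 0 → Y ≠ 0 →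
          (s ^ 2 * t ^ 2 - 1) / (X * Y) = (s ^ 2 * (t ^ 2 / Y) - 1 / Y) * (1 / X) := by
        intro X Y hX hY
        field_simp
      rw [hbig, Real.mul_rpow (hPpos s).le (hQpos t).le]
      exact gen _ _ (hPDpos s).ne' (hQDpos t).ne'
    simp only [h1]
    rw [integral_mul_const, integral_sub (IQ2.const_mul (s^2)) IQ0,
      integral_const_mul]
    rw [← hCdef, ← hDdef]
    ring
  simp only [inner]
  rw [integral_sub ((IP 2 (by norm_num)).const_mul C) (IP0.const_mul D),
    integral_const_mul _ _, integral_const_mul _ _]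
  -- even symmetry
  have evenP2 : (∫ s : ℝ, s ^ 2 / PD a b c s) = 2 * ∫ s in Ioi (0:ℝ), s ^ 2 / PD a b c s := by
    rw [← integral_comp_abs (f := fun x : ℝ => x ^ 2 / PD a b c x)]
    congr 1; funext s; simp [PD, sq_abs]
  have evenP0 : (∫ s : ℝ, 1 / PD a b c s) = 2 * ∫ s in Ioi (0:ℝ), 1 / PD a b c s := by
    rw [← integral_comp_abs (f := fun x : ℝ => 1 / PD a b c x)]
    congr 1; funext s; simp [PD, sq_abs]
  have evenQ2 : C = 2 * ∫ t in Ioi (0:ℝ), t ^ 2 / QD a b c t := by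
    rw [hCdef, ← integral_comp_abs (f := fun x : ℝ => x ^ 2 / QD a b c x)]
    congr 1; funext t; simp [QD, sq_abs]
  have evenQ0 : D = 2 * ∫ t in Ioi (0:ℝ), 1 / QD a b c t := by
    rw [hDdef, ← integral_comp_abs (f := fun x : ℝ => 1 / QD a b c x)]
    congr 1; funext t; simp [QD, sq_abs]
  -- substitution
  have subC : (∫ t in Ioi (0:ℝ), t ^ 2 / QD a b c t)
      = (a*b*c)^3 * ∫ x in Ioi (0:ℝ), x ^ 5 / PD a b c x := by
    simpa [PD, QD] using aux_subst a b c ha hb hc 2 5 (by norm_num)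
  have subD : (∫ t in Ioi (0:ℝ), 1 / QD a b c t)
      = (a*b*c)^3 * ∫ x in Ioi (0:ℝ), x ^ 7 / PD a b c x := by
    have := aux_subst a b c ha hb hc 0 7 (by norm_num)
    simp only [pow_zero] at this
    simpa [PD, QD] using this
  -- Chebyshev
  have hcheb := aux_cheb (W := fun x => PD a b c x) hPDpos IP0 (IP 2 (by norm_num))
    (IP 5 (by norm_num)) (IP 7 (by norm_num))
  have habc : (0:ℝ) < (a*b*c)^3 := by positivity
  rw [evenQ2, subC] at *
  rw [evenQ0, subD, evenP2, evenP0]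
  nlinarith [hcheb, habc]
end
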